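/- Let M be a pointed metric space such that SA(M, ℝ) is dense in Lip₀(M, ℝ), let ρ ∈ [0,1), and let Y be a real Banach space having ACK structure with parameter ρ. Then SA_K(M, Y) is dense in Lipc(M, Y). -/

import Mathlib

open Set Metric NNReal MeasureTheory

/-- A Lipschitz map vanishing at the base point `z`, i.e. an element of `Lip₀(M,Y)`. -/
def IsLip0 {M Y : Type*} [MetricSpace M] [NormedAddCommGroup Y]
    (z : M) (F : M → Y) : Prop :=
  (∃ K : ℝ≥0, LipschitzWith K F) ∧ F z = 0

/-- The Lipschitz norm `‖F‖_L = sup {‖F p - F q‖ / d(p,q) : p ≠ q}`. -/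
noncomputable def lipNorm {M Y : Type*} [MetricSpace M] [NormedAddCommGroup Y]
    (F : M → Y) : ℝ :=
  sSup {r : ℝ | ∃ p q : M, p ≠ q ∧ r = ‖F p - F q‖ / dist p q}

/-- `F` strongly attains its norm. -/
def StronglyAttains {M Y : Type*} [MetricSpace M] [NormedAddCommGroup Y]
    (F : M → Y) : Prop :=
  ∃ p q : M, p ≠ q ∧ ‖F p - F q‖ = lipNorm F * dist p q

/-- `F` is Lipschitz compact: its Lipschitz image is relatively compact. -/
def IsLipCompact {M Y : Type*} [MetricSpace M] [NormedAddCommGroup Y] [NormedSpace ℝ Y]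
    (F : M → Y) : Prop :=
  IsCompact (closure {y : Y | ∃ p q : M, p ≠ q ∧ y = (dist p q)⁻¹ • (F p - F q)})

/-- The pair `(M,Y)` has the Lip-BPB property witnessed by the function `η`. -/
def LipBPBWith (M : Type*) [MetricSpace M] (z : M)
    (Y : Type*) [NormedAddCommGroup Y] (η : ℝ → ℝ) : Prop :=
  (∀ ε > 0, η ε > 0) ∧
  ∀ ε > 0, ∀ F : M → Y, IsLip0 z F → lipNorm F = 1 →
    ∀ p q : M, p ≠ q → ‖F p - F q‖ > (1 - η ε) * dist p q →
      ∃ G : M → Y, IsLip0 z G ∧ ∃ r s : M, r ≠ s ∧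
        ‖G r - G s‖ = dist r s ∧ lipNorm G = 1 ∧
        lipNorm (fun x => G x - F x) < ε ∧
        (dist p r + dist q s) / dist p q < ε

/-- The pair `(M,Y)` has the Lip-BPB property. -/
def LipBPB (M : Type*) [MetricSpace M] (z : M)
    (Y : Type*) [NormedAddCommGroup Y] : Prop :=
  ∃ η : ℝ → ℝ, LipBPBWith M z Y η

/-- The pair `(M,Y)` has the Lip-BPB property for Lipschitz compact maps
witnessed by the function `η`. -/
def LipBPBCompactWith (M : Type*) [MetricSpace M] (z : M)
    (Y : Type*) [NormedAddCommGroup Y] [NormedSpace ℝ Y] (η : ℝ → ℝ) : Prop :=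
  (∀ ε > 0, η ε > 0) ∧
  ∀ ε > 0, ∀ F : M → Y, IsLip0 z F → IsLipCompact F → lipNorm F = 1 →
    ∀ p q : M, p ≠ q → ‖F p - F q‖ > (1 - η ε) * dist p q →
      ∃ G : M → Y, IsLip0 z G ∧ IsLipCompact G ∧ ∃ r s : M, r ≠ s ∧
        ‖G r - G s‖ = dist r s ∧ lipNorm G = 1 ∧
        lipNorm (fun x => G x - F x) < ε ∧
        (dist p r + dist q s) / dist p q < ε

/-- The pair `(M,Y)` has the Lip-BPB property for Lipschitz compact maps. -/
def LipBPBCompact (M : Type*) [MetricSpace M] (z : M)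
    (Y : Type*) [NormedAddCommGroup Y] [NormedSpace ℝ Y] : Prop :=
  ∃ η : ℝ → ℝ, LipBPBCompactWith M z Y η

/-- `SA(M,Y)` is dense in `Lip₀(M,Y)`. -/
def SADense (M : Type*) [MetricSpace M] (z : M)
    (Y : Type*) [NormedAddCommGroup Y] : Prop :=
  ∀ F : M → Y, IsLip0 z F → ∀ ε > 0,
    ∃ G : M → Y, IsLip0 z G ∧ StronglyAttains G ∧ lipNorm (fun x => G x - F x) < ε

/-- `SA_K(M,Y)` is dense in `Lipc(M,Y)`. -/
def SAKDense (M : Type*) [MetricSpace M] (z : M)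
    (Y : Type*) [NormedAddCommGroup Y] [NormedSpace ℝ Y] : Prop :=
  ∀ F : M → Y, IsLip0 z F → IsLipCompact F → ∀ ε > 0,
    ∃ G : M → Y, IsLip0 z G ∧ IsLipCompact G ∧ StronglyAttains G ∧
      lipNorm (fun x => G x - F x) < ε

/-- A set of functionals on `Y` is weak-star open. -/
def IsWeakStarOpen {Y : Type*} [NormedAddCommGroup Y] [NormedSpace ℝ Y]
    (U : Set (Y →L[ℝ] ℝ)) : Prop :=
  IsOpen (X := WeakDual ℝ Y) (StrongDual.toWeakDual '' U)

/-- `Γ ⊆ B_{Y*}` is a 1-norming set. -/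
def IsOneNorming {Y : Type*} [NormedAddCommGroup Y] [NormedSpace ℝ Y]
    (Γ : Set (Y →L[ℝ] ℝ)) : Prop :=
  (∀ φ ∈ Γ, ‖φ‖ ≤ 1) ∧ ∀ y : Y, ‖y‖ = sSup {t : ℝ | ∃ φ ∈ Γ, t = |φ y|}

/-- `Y` has ACK structure with parameter `ρ`, witnessed by the 1-norming set `Γ`. -/
def ACKWith (Y : Type*) [NormedAddCommGroup Y] [NormedSpace ℝ Y]
    (ρ : ℝ) (Γ : Set (Y →L[ℝ] ℝ)) : Prop :=
  IsOneNorming Γ ∧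
  ∀ ε > (0 : ℝ), ∀ U : Set (Y →L[ℝ] ℝ), U.Nonempty → U ⊆ Γ →
    (∃ W : Set (Y →L[ℝ] ℝ), IsWeakStarOpen W ∧ U = W ∩ Γ) →
    ∃ V ⊆ U, V.Nonempty ∧ ∃ y₁ ∈ V, ∃ e : Y, ‖e‖ = 1 ∧ ∃ F : Y →L[ℝ] Y,
      ‖F e‖ = 1 ∧ ‖F‖ = 1 ∧
      y₁ (F e) = 1 ∧
      y₁.comp F = y₁ ∧
      (∀ φ ∈ Γ, φ ∉ {ψ ∈ Γ | ‖ψ.comp F‖ + (1 - ε) * ‖ψ - ψ.comp F‖ ≤ 1} →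
        |φ (F e)| ≤ ρ) ∧
      (∀ φ ∈ Γ, ∃ (n : ℕ) (v : Fin n → (Y →L[ℝ] ℝ)) (c : Fin n → ℝ),
        (∀ k, v k ∈ V) ∧ (∑ k, |c k|) ≤ 1 ∧
        ‖φ.comp F - ∑ k, c k • v k‖ < ε) ∧
      (∀ φ ∈ V, |φ e - 1| ≤ ε)

/-- `Y` has ACK structure with parameter `ρ`. -/
def HasACK (Y : Type*) [NormedAddCommGroup Y] [NormedSpace ℝ Y] (ρ : ℝ) : Prop :=
  ∃ Γ : Set (Y →L[ℝ] ℝ), ACKWith Y ρ Γ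

/-- `T : M → Y` is a `Γ`-flat map. -/
def IsGammaFlat {M Y : Type*} [MetricSpace M] [NormedAddCommGroup Y] [NormedSpace ℝ Y]
    (Γ : Set (Y →L[ℝ] ℝ)) (T : M → Y) : Prop :=
  ∀ U : Set (Y →L[ℝ] ℝ), IsWeakStarOpen U → (U ∩ Γ).Nonempty → ∀ δ > (0 : ℝ),
    ∃ V : Set (Y →L[ℝ] ℝ), IsWeakStarOpen V ∧ V ⊆ U ∧ (V ∩ Γ).Nonempty ∧
      ∀ φ ∈ V ∩ Γ, ∀ ψ ∈ V ∩ Γ, lipNorm (fun x => φ (T x) - ψ (T x)) < δ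

/-! ### Auxiliary lemmas about `lipNorm` -/

private lemma lipRatio_bddAbove {M Y : Type*} [MetricSpace M] [NormedAddCommGroup Y]
    {F : M → Y} {K : ℝ≥0} (hF : LipschitzWith K F) :
    BddAbove {r : ℝ | ∃ p q : M, p ≠ q ∧ r = ‖F p - F q‖ / dist p q} := by
  refine ⟨K, ?_⟩
  rintro r ⟨p, q, hpq, rfl⟩
  rw [div_le_iff₀ (dist_pos.mpr hpq)]
  simpa [dist_eq_norm] using hF.dist_le_mul p q

private lemma lipNorm_le_of_forall {M Y : Type*} [MetricSpace M] [NormedAddCommGroup Y]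
    {F : M → Y} {C : ℝ} (hC : 0 ≤ C) (h : ∀ p q : M, ‖F p - F q‖ ≤ C * dist p q) :
    lipNorm F ≤ C := by
  apply Real.sSup_le _ hC
  rintro r ⟨p, q, hpq, rfl⟩
  rw [div_le_iff₀ (dist_pos.mpr hpq)]
  exact h p q

private lemma norm_sub_le_lipNorm {M Y : Type*} [MetricSpace M] [NormedAddCommGroup Y]
    {F : M → Y} {K : ℝ≥0} (hF : LipschitzWith K F) (p q : M) :
    ‖F p - F q‖ ≤ lipNorm F * dist p q := by
  rcases eq_or_ne p q with rfl | hpq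
  · simp
  · have h1 : ‖F p - F q‖ / dist p q ≤ lipNorm F :=
      le_csSup (lipRatio_bddAbove hF) ⟨p, q, hpq, rfl⟩
    rwa [div_le_iff₀ (dist_pos.mpr hpq)] at h1

private lemma ratio_le_lipNorm {M Y : Type*} [MetricSpace M] [NormedAddCommGroup Y]
    {F : M → Y} {K : ℝ≥0} (hF : LipschitzWith K F) {p q : M} (hpq : p ≠ q) :
    ‖F p - F q‖ / dist p q ≤ lipNorm F :=
  le_csSup (lipRatio_bddAbove hF) ⟨p, q, hpq, rfl⟩

private lemma lipNorm_pack {M Y : Type*} [MetricSpace M] [NormedAddCommGroup Y]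
    {F : M → Y} {C : ℝ} {r s : M} (hC : 0 ≤ C) (hrs : r ≠ s)
    (hub : ∀ p q : M, ‖F p - F q‖ ≤ C * dist p q)
    (hval : ‖F r - F s‖ = C * dist r s) :
    lipNorm F = C ∧ StronglyAttains F := by
  have hbdd : BddAbove {x : ℝ | ∃ p q : M, p ≠ q ∧ x = ‖F p - F q‖ / dist p q} := by
    refine ⟨C, ?_⟩
    rintro x ⟨p, q, hpq, rfl⟩
    rw [div_le_iff₀ (dist_pos.mpr hpq)]
    exact hub p q
  have h1 : lipNorm F ≤ C := by
    apply Real.sSup_le _ hC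
    rintro x ⟨p, q, hpq, rfl⟩
    rw [div_le_iff₀ (dist_pos.mpr hpq)]
    exact hub p q
  have h2 : C ≤ lipNorm F := by
    have hmem : ‖F r - F s‖ / dist r s ∈
        {x : ℝ | ∃ p q : M, p ≠ q ∧ x = ‖F p - F q‖ / dist p q} := ⟨r, s, hrs, rfl⟩
    have h3 := le_csSup hbdd hmem
    rwa [hval, mul_div_assoc, div_self (dist_pos.mpr hrs).ne', mul_one] at h3
  have heq := le_antisymm h1 h2
  exact ⟨heq, r, s, hrs, by rw [heq]; exact hval⟩

private lemma num_c16 {c ρ t : ℝ} (hc0 : 0 ≤ c) (hρ0 : 0 ≤ ρ) (h : c * (1 - ρ) = 16 * t) :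
    16 * t ≤ c := by nlinarith [mul_nonneg hc0 hρ0]

private lemma num_c2 {c ρ t : ℝ} (hρ' : 0 < 1 - ρ) (ht1 : t ≤ (1 - ρ) / 8)
    (h : c * (1 - ρ) = 16 * t) : c ≤ 2 := by nlinarith

private lemma num_A1 {t c G : ℝ} (ht0 : 0 < t) (ht2 : t ≤ 1 / 8) (hc16 : 16 * t ≤ c)
    (hG : 1 - 2 * t ≤ G) : 1 ≤ (1 - t) * ((1 + c) * G) := by
  have h1 : (1:ℝ) ≤ (1 - t) * ((1 + 16 * t) * (1 - 2 * t)) := by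
    have hA : t * t ≤ t * (1 / 8) := mul_le_mul_of_nonneg_left ht2 ht0.le
    have hB : 0 ≤ t * t * t := by positivity
    nlinarith [hA, hB]
  calc (1:ℝ) ≤ (1 - t) * ((1 + 16 * t) * (1 - 2 * t)) := h1
    _ ≤ (1 - t) * ((1 + c) * G) := by
        apply mul_le_mul_of_nonneg_left _ (by linarith)
        apply mul_le_mul (by linarith) hG (by linarith) (by linarith)

private lemma num_B1 {t c ρ G : ℝ} (ht0 : 0 < t) (ht2 : t ≤ 1 / 8) (hρ0 : 0 ≤ ρ)
    (hc0 : 0 ≤ c) (hcc : c - c * ρ = 16 * t) (hG : 1 - 2 * t ≤ G) :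
    1 + 3 * t + (2 * t + c * ρ) * G ≤ (1 + c) * G := by
  have h2 : (1 - 2 * t) * (1 + 14 * t) ≤ G * (1 + 14 * t) :=
    mul_le_mul_of_nonneg_right hG (by linarith)
  have h3 : 1 + 3 * t ≤ (1 - 2 * t) * (1 + 14 * t) := by nlinarith
  have h4 : (c - c * ρ) * G = 16 * t * G := by rw [hcc]
  nlinarith [h2, h3, h4]

private lemma num_D0 {t c : ℝ} (ht0 : 0 < t) (hc0 : 0 ≤ c) :
    0 ≤ 3 * t + (2 * t + c) * (1 + t) := by nlinarith

private lemma num_final {L t c ρ ε : ℝ} (hL : 0 < L) (hε : 0 < ε) (ht0 : 0 < t)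
    (ht1 : t ≤ (1 - ρ) / 8) (ht2 : t ≤ 1 / 8) (hρ0 : 0 ≤ ρ) (hρ1 : ρ < 1) (hc0 : 0 ≤ c)
    (hcρ : c * (1 - ρ) = 16 * t) (ht3 : t ≤ (1 - ρ) * ε / (100 * L)) :
    L * (3 * t + (2 * t + c) * (1 + t)) < ε := by
  have hρ' : 0 < 1 - ρ := by linarith
  have hLt : L * t ≤ (1 - ρ) * ε / 100 := by
    have h := mul_le_mul_of_nonneg_left ht3 hL.le
    have heq : L * ((1 - ρ) * ε / (100 * L)) = (1 - ρ) * ε / 100 := by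
      field_simp
    rwa [heq] at h
  have hLt' : L * t ≤ ε / 100 := by nlinarith [mul_nonneg hρ0 hε.le]
  have hLc : L * c ≤ 16 * ε / 100 := by
    have h1 : L * c * (1 - ρ) = 16 * (L * t) := by linear_combination L * hcρ
    nlinarith
  have hc2 : c ≤ 2 := num_c2 hρ' ht1 hcρ
  have hD6 : 3 * t + (2 * t + c) * (1 + t) ≤ 6 * t + (9 / 8) * c := by
    nlinarith [mul_le_mul_of_nonneg_left ht2 hc0, mul_le_mul_of_nonneg_left ht2 ht0.le]
  have h1 : L * (3 * t + (2 * t + c) * (1 + t)) ≤ L * (6 * t + (9 / 8) * c) :=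
    mul_le_mul_of_nonneg_left hD6 hL.le
  nlinarith

set_option maxHeartbeats 1000000 in
/-- If `SA(M, ℝ)` is dense in `Lip₀(M, ℝ)` and `Y` has ACK structure with parameter
`ρ ∈ [0,1)`, then `SA_K(M, Y)` is dense in `Lipc(M, Y)`. -/
theorem saKDense_of_ACK {M Y : Type*} [MetricSpace M] [CompleteSpace M]
    [NormedAddCommGroup Y] [NormedSpace ℝ Y] [CompleteSpace Y]
    (z : M) (hM : SADense M z ℝ)
    (ρ : ℝ) (hρ0 : 0 ≤ ρ) (hρ1 : ρ < 1) (hY : HasACK Y ρ) :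
    SAKDense M z Y := by
  obtain ⟨Γ, ⟨hΓ1, hΓn⟩, hACK⟩ := hY
  intro F₀ hF₀l hF₀c ε hε
  obtain ⟨⟨K₀, hK₀⟩, hF₀z⟩ := hF₀l
  -- M has at least two points
  have hMnt : ∃ p q : M, p ≠ q := by
    obtain ⟨G, -, hSA, -⟩ := hM (fun _ => (0 : ℝ))
      ⟨⟨0, LipschitzWith.const (0 : ℝ)⟩, rfl⟩ 1 one_pos
    obtain ⟨p, q, hpq, -⟩ := hSA
    exact ⟨p, q, hpq⟩
  by_cases hL0 : lipNorm F₀ ≤ 0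
  · -- trivial case : F₀ ≡ 0
    have hzero : ∀ x, F₀ x = 0 := by
      intro x
      rcases eq_or_ne x z with rfl | hxz
      · exact hF₀z
      · have h1 : ‖F₀ x - F₀ z‖ / dist x z ≤ lipNorm F₀ := ratio_le_lipNorm hK₀ hxz
        have h2 : 0 ≤ ‖F₀ x - F₀ z‖ / dist x z := by positivity
        have h3 : ‖F₀ x - F₀ z‖ / dist x z = 0 := le_antisymm (h1.trans hL0) h2
        rcases div_eq_zero_iff.mp h3 with h4 | h4
        · have h5 : F₀ x = F₀ z := by
            rwa [norm_eq_zero, sub_eq_zero] at h4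
          rw [h5, hF₀z]
        · exact absurd h4 (dist_pos.mpr hxz).ne'
    obtain ⟨p₁, q₁, hpq₁⟩ := hMnt
    have hln : lipNorm (fun _ : M => (0 : Y)) = 0 := by
      have hset : {r : ℝ | ∃ p q : M, p ≠ q ∧
          r = ‖(fun _ : M => (0 : Y)) p - (fun _ : M => (0 : Y)) q‖ / dist p q} = {0} := by
        ext r
        simp only [Set.mem_setOf_eq, Set.mem_singleton_iff, sub_zero, norm_zero, zero_div]
        constructor
        · rintro ⟨p, q, hpq, rfl⟩; rfl
        · rintro rfl; exact ⟨p₁, q₁, hpq₁, rfl⟩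
      rw [lipNorm, hset, csSup_singleton]
    refine ⟨fun _ => 0, ⟨⟨0, LipschitzWith.const (0 : Y)⟩, rfl⟩, ?_, ?_, ?_⟩
    · -- compactness
      have hset : {y : Y | ∃ p q : M, p ≠ q ∧
          y = (dist p q)⁻¹ • ((fun _ : M => (0 : Y)) p - (fun _ : M => (0 : Y)) q)} = {0} := by
        ext y
        simp only [Set.mem_setOf_eq, Set.mem_singleton_iff, sub_zero, smul_zero]
        constructor
        · rintro ⟨p, q, hpq, rfl⟩; rfl
        · rintro rfl; exact ⟨p₁, q₁, hpq₁, rfl⟩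
      show IsCompact (closure _)
      rw [hset, closure_singleton]
      exact isCompact_singleton
    · exact ⟨p₁, q₁, hpq₁, by rw [hln]; simp⟩
    · have heq : (fun x => (fun _ : M => (0 : Y)) x - F₀ x) = fun _ : M => (0 : Y) :=
        funext fun x => by rw [hzero x]; simp
      rw [heq, hln]
      exact hε
  -- main case
  push_neg at hL0
  set L : ℝ := lipNorm F₀ with hLdef
  have hL : 0 < L := hL0
  clear_value L
  have hρ' : 0 < 1 - ρ := by linarith
  -- the small parameter t and the boost c
  set t : ℝ := min ((1 - ρ) / 8) (min (1 / 8) ((1 - ρ) * ε / (100 * L))) with htdef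
  have ht0 : 0 < t := by
    apply lt_min (by positivity) (lt_min (by norm_num) (by positivity))
  have ht1 : t ≤ (1 - ρ) / 8 := min_le_left _ _
  have ht2 : t ≤ 1 / 8 := le_trans (min_le_right _ _) (min_le_left _ _)
  have ht3 : t ≤ (1 - ρ) * ε / (100 * L) := le_trans (min_le_right _ _) (min_le_right _ _)
  clear_value t
  set c : ℝ := 16 * t / (1 - ρ) with hcdef
  have hc0 : 0 ≤ c := by rw [hcdef]; positivity
  have hcρ : c * (1 - ρ) = 16 * t := by rw [hcdef]; field_simp
  clear_value c
  have hcc : c - c * ρ = 16 * t := by linear_combination hcρ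
  have hc16 : 16 * t ≤ c := num_c16 hc0 hρ0 hcρ
  have hc2 : c ≤ 2 := num_c2 hρ' ht1 hcρ
  -- the normalized map T
  set T : M → Y := fun x => (L⁻¹ : ℝ) • F₀ x with hTdef
  have hTz : T z = 0 := by rw [hTdef]; simp [hF₀z]
  have hTsub : ∀ p q : M, T p - T q = (L⁻¹ : ℝ) • (F₀ p - F₀ q) := by
    intro p q; rw [hTdef]; simp [smul_sub]
  have hw : ∀ p q : M, ‖T p - T q‖ ≤ dist p q := by
    intro p q
    rw [hTsub, norm_smul, Real.norm_eq_abs, abs_of_pos (inv_pos.mpr hL)]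
    have h1 : ‖F₀ p - F₀ q‖ ≤ L * dist p q := by
      rw [hLdef]; exact norm_sub_le_lipNorm hK₀ p q
    calc L⁻¹ * ‖F₀ p - F₀ q‖ ≤ L⁻¹ * (L * dist p q) := by
          exact mul_le_mul_of_nonneg_left h1 (by positivity)
      _ = dist p q := by field_simp
  have hTlip : ∃ KT : ℝ≥0, LipschitzWith KT T := by
    refine ⟨1, LipschitzWith.of_dist_le_mul fun x y => ?_⟩
    rw [dist_eq_norm]
    simpa using hw x y
  obtain ⟨KT', hKT'⟩ := hTlip
  -- a pair of points where the ratio of T is nearly 1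
  have hSne : {r : ℝ | ∃ p q : M, p ≠ q ∧ r = ‖F₀ p - F₀ q‖ / dist p q}.Nonempty := by
    by_contra h
    rw [Set.not_nonempty_iff_eq_empty] at h
    have : lipNorm F₀ = 0 := by rw [lipNorm, h, Real.sSup_empty]
    rw [← hLdef] at this
    linarith
  have hlt : (1 - t / 2) * L < lipNorm F₀ := by
    rw [← hLdef]
    have h := mul_pos (half_pos ht0) hL
    linarith
  obtain ⟨r₀, hr₀mem, hr₀⟩ := exists_lt_of_lt_csSup hSne hlt
  obtain ⟨p₀, q₀, hp₀q₀, rfl⟩ := hr₀mem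
  have hd₀ : 0 < dist p₀ q₀ := dist_pos.mpr hp₀q₀
  set y₀ : Y := (dist p₀ q₀)⁻¹ • (T p₀ - T q₀) with hy₀def
  have hy₀norm : 1 - t / 2 < ‖y₀‖ := by
    rw [hy₀def, hTsub, norm_smul, norm_smul, Real.norm_eq_abs, Real.norm_eq_abs,
      abs_of_pos (inv_pos.mpr hd₀), abs_of_pos (inv_pos.mpr hL)]
    have h := (lt_div_iff₀ hd₀).mp hr₀
    have heq : (dist p₀ q₀)⁻¹ * (L⁻¹ * ‖F₀ p₀ - F₀ q₀‖)
        = ‖F₀ p₀ - F₀ q₀‖ / (L * dist p₀ q₀) := by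
      rw [div_eq_mul_inv, mul_inv]
      ring
    rw [heq, lt_div_iff₀ (by positivity)]
    linarith
  -- the functional φ₀
  have hφ₀ex : ∃ φ ∈ Γ, 1 - t < |φ y₀| := by
    have h1 : 1 - t < ‖y₀‖ := by linarith
    rw [hΓn y₀] at h1
    have hne : {s : ℝ | ∃ φ ∈ Γ, s = |φ y₀|}.Nonempty := by
      by_contra h
      rw [Set.not_nonempty_iff_eq_empty] at h
      rw [h, Real.sSup_empty] at h1
      linarith
    obtain ⟨s', ⟨φ, hφ, rfl⟩, hs'⟩ := exists_lt_of_lt_csSup hne h1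
    exact ⟨φ, hφ, hs'⟩
  obtain ⟨φ₀, hφ₀Γ, hφ₀⟩ := hφ₀ex
  -- compact set and finite cover
  have hK₀c : IsCompact (closure {y : Y | ∃ p q : M, p ≠ q ∧
      y = (dist p q)⁻¹ • (F₀ p - F₀ q)}) := hF₀c
  set K₀s : Set Y := closure {y : Y | ∃ p q : M, p ≠ q ∧
      y = (dist p q)⁻¹ • (F₀ p - F₀ q)} with hK₀def
  set KT : Set Y := (fun y => (L⁻¹ : ℝ) • y) '' K₀s with hKTdef
  have hKTc : IsCompact KT := hK₀c.image (continuous_const_smul _)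
  obtain ⟨tset, htfin, hcov⟩ := (totallyBounded_iff.mp hKTc.totallyBounded) (t / 8) (by positivity)
  -- the relatively weak-star open set W
  set N : Set (Y →L[ℝ] ℝ) := ⋂ y ∈ tset, {φ : Y →L[ℝ] ℝ | |φ y - φ₀ y| < t / 8} with hNdef
  set W : Set (Y →L[ℝ] ℝ) := {φ : Y →L[ℝ] ℝ | 1 - t < |φ y₀|} ∩ N with hWdef
  have hφ₀W : φ₀ ∈ W := by
    refine ⟨hφ₀, ?_⟩
    rw [hNdef]
    refine Set.mem_biInter fun y hy => ?_
    show |φ₀ y - φ₀ y| < t / 8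
    simp only [sub_self, abs_zero]
    positivity
  have hWopen : IsWeakStarOpen W := by
    have himg : StrongDual.toWeakDual '' W =
        {ψ : WeakDual ℝ Y | 1 - t < |ψ y₀|} ∩
          ⋂ y ∈ tset, {ψ : WeakDual ℝ Y | |ψ y - φ₀ y| < t / 8} := by
      ext ψ
      constructor
      · rintro ⟨φ, ⟨h1, h2⟩, rfl⟩
        refine ⟨h1, ?_⟩
        refine Set.mem_biInter fun y hy => ?_
        have := Set.mem_iInter₂.mp h2 y hy
        exact this
      · rintro ⟨h1, h2⟩
        refine ⟨StrongDual.toWeakDual.symm ψ, ⟨?_, ?_⟩, ?_⟩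
        · exact h1
        · refine Set.mem_biInter fun y hy => ?_
          exact Set.mem_iInter₂.mp h2 y hy
        · exact StrongDual.toWeakDual.apply_symm_apply ψ
    show IsOpen (StrongDual.toWeakDual '' W)
    rw [himg]
    apply IsOpen.inter
    · exact isOpen_lt continuous_const (WeakDual.eval_continuous y₀).abs
    · exact htfin.isOpen_biInter fun y hy =>
        isOpen_lt ((WeakDual.eval_continuous y).sub continuous_const).abs continuous_const
  -- apply the ACK structure
  obtain ⟨V, hVU, hVne, y₁, hy₁V, e, he, F_op, hFe, hFn, hy₁Fe, hy₁F, hρcond, happrox, hVe⟩ :=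
    hACK t ht0 (W ∩ Γ) ⟨φ₀, hφ₀W, hφ₀Γ⟩ Set.inter_subset_right ⟨W, hWopen, rfl⟩
  set et : Y := F_op e with hetdef
  have hy₁Γ : y₁ ∈ Γ := (hVU hy₁V).2
  have hy₁n : ‖y₁‖ ≤ 1 := hΓ1 y₁ hy₁Γ
  have hy₁W : y₁ ∈ W := (hVU hy₁V).1
  -- pairwise closeness on KT of functionals in W ∩ Γ
  have hpair : ∀ α ∈ W ∩ Γ, ∀ β ∈ W ∩ Γ, ∀ y ∈ KT, |α y - β y| ≤ t / 2 := by
    rintro α ⟨hαW, hαΓ⟩ β ⟨hβW, hβΓ⟩ y hy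
    obtain ⟨cy, hcy, hycy⟩ := Set.mem_iUnion₂.mp (hcov hy)
    rw [Metric.mem_ball] at hycy
    have hα1 : ‖α‖ ≤ 1 := hΓ1 α hαΓ
    have hβ1 : ‖β‖ ≤ 1 := hΓ1 β hβΓ
    have hαc : |α cy - φ₀ cy| < t / 8 := Set.mem_iInter₂.mp hαW.2 cy hcy
    have hβc : |β cy - φ₀ cy| < t / 8 := Set.mem_iInter₂.mp hβW.2 cy hcy
    have hbnd : ∀ γ : Y →L[ℝ] ℝ, ‖γ‖ ≤ 1 → |γ y - γ cy| ≤ t / 8 := by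
      intro γ hγ
      have h1 : γ y - γ cy = γ (y - cy) := (map_sub γ y cy).symm
      rw [h1]
      have h2 : ‖γ (y - cy)‖ ≤ ‖γ‖ * ‖y - cy‖ := γ.le_opNorm _
      rw [Real.norm_eq_abs] at h2
      have h3 : ‖y - cy‖ ≤ t / 8 := by
        rw [← dist_eq_norm]; exact hycy.le
      calc |γ (y - cy)| ≤ ‖γ‖ * ‖y - cy‖ := h2
        _ ≤ 1 * (t / 8) := mul_le_mul hγ h3 (norm_nonneg _) zero_le_one
        _ = t / 8 := one_mul _
    have h1 := hbnd α hα1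
    have h2 := hbnd β hβ1
    have hchain : |α y - β y| ≤ |α y - α cy| + |α cy - φ₀ cy| + |φ₀ cy - β cy| + |β cy - β y| := by
      have e1 : α y - β y = (α y - α cy) + (α cy - φ₀ cy) + (φ₀ cy - β cy) + (β cy - β y) := by
        ring
      rw [e1]
      calc |(α y - α cy) + (α cy - φ₀ cy) + (φ₀ cy - β cy) + (β cy - β y)|
          ≤ |(α y - α cy) + (α cy - φ₀ cy) + (φ₀ cy - β cy)| + |β cy - β y| := abs_add_le _ _
        _ ≤ |(α y - α cy) + (α cy - φ₀ cy)| + |φ₀ cy - β cy| + |β cy - β y| := by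
            have := abs_add_le ((α y - α cy) + (α cy - φ₀ cy)) (φ₀ cy - β cy)
            linarith
        _ ≤ |α y - α cy| + |α cy - φ₀ cy| + |φ₀ cy - β cy| + |β cy - β y| := by
            have := abs_add_le (α y - α cy) (α cy - φ₀ cy)
            linarith
    have h4 : |φ₀ cy - β cy| = |β cy - φ₀ cy| := abs_sub_comm _ _
    have h5 : |β cy - β y| = |β y - β cy| := abs_sub_comm _ _
    rw [h4, h5] at hchain
    linarith
  -- closeness of v ∘ T to y₁ ∘ T for v ∈ V
  have hVclose : ∀ v ∈ V, ∀ p q : M, |v (T p - T q) - y₁ (T p - T q)| ≤ t / 2 * dist p q := by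
    intro v hv p q
    rcases eq_or_ne p q with rfl | hpq
    · simp
    · have hd : 0 < dist p q := dist_pos.mpr hpq
      have hyT : (dist p q)⁻¹ • (T p - T q) ∈ KT := by
        refine ⟨(dist p q)⁻¹ • (F₀ p - F₀ q), subset_closure ⟨p, q, hpq, rfl⟩, ?_⟩
        rw [hTsub, smul_comm]
      have hcl := hpair v (hVU hv) y₁ (hVU hy₁V) _ hyT
      have e1 : v ((dist p q)⁻¹ • (T p - T q)) = (dist p q)⁻¹ * v (T p - T q) := by
        rw [ContinuousLinearMap.map_smul, smul_eq_mul]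
      have e2 : y₁ ((dist p q)⁻¹ • (T p - T q)) = (dist p q)⁻¹ * y₁ (T p - T q) := by
        rw [ContinuousLinearMap.map_smul, smul_eq_mul]
      rw [e1, e2, ← mul_sub, abs_mul, abs_of_pos (inv_pos.mpr hd)] at hcl
      have h3 : |v (T p - T q) - y₁ (T p - T q)|
          = dist p q * ((dist p q)⁻¹ * |v (T p - T q) - y₁ (T p - T q)|) := by
        rw [← mul_assoc, mul_inv_cancel₀ hd.ne', one_mul]
      rw [h3]
      calc dist p q * ((dist p q)⁻¹ * |v (T p - T q) - y₁ (T p - T q)|)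
          ≤ dist p q * (t / 2) := mul_le_mul_of_nonneg_left hcl hd.le
        _ = t / 2 * dist p q := mul_comm _ _
  -- the scalar function f = y₁ ∘ T and its approximation g
  set f : M → ℝ := fun x => y₁ (T x) with hfdef
  have hflip : LipschitzWith (‖y₁‖₊ * KT') f := y₁.lipschitz.comp hKT'
  have hfz : f z = 0 := by rw [hfdef]; simp [hTz]
  obtain ⟨g, ⟨⟨Kg, hKg⟩, hgz⟩, hgSA, hgf⟩ := hM f ⟨⟨_, hflip⟩, hfz⟩ t ht0
  obtain ⟨r, s, hrs, hgatt⟩ := hgSA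
  have hKgf : LipschitzWith (Kg + ‖y₁‖₊ * KT') (fun x => g x - f x) := hKg.sub hflip
  have hgfpt : ∀ p q : M, |(g p - f p) - (g q - f q)| ≤ t * dist p q := by
    intro p q
    have h1 := norm_sub_le_lipNorm hKgf p q
    rw [Real.norm_eq_abs] at h1
    calc |(g p - f p) - (g q - f q)| ≤ lipNorm (fun x => g x - f x) * dist p q := h1
      _ ≤ t * dist p q := mul_le_mul_of_nonneg_right hgf.le dist_nonneg
  have hfsub : ∀ p q : M, f p - f q = y₁ (T p - T q) := by
    intro p q; rw [hfdef]; simp [map_sub]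
  have hfpt : ∀ p q : M, |f p - f q| ≤ dist p q := by
    intro p q
    rw [hfsub]
    have h1 : ‖y₁ (T p - T q)‖ ≤ ‖y₁‖ * ‖T p - T q‖ := y₁.le_opNorm _
    rw [Real.norm_eq_abs] at h1
    calc |y₁ (T p - T q)| ≤ ‖y₁‖ * ‖T p - T q‖ := h1
      _ ≤ 1 * dist p q := mul_le_mul hy₁n (hw p q) (norm_nonneg _) zero_le_one
      _ = dist p q := one_mul _
  set G : ℝ := lipNorm g with hGdef
  clear_value G
  have hgpt : ∀ p q : M, |g p - g q| ≤ G * dist p q := by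
    intro p q
    have := norm_sub_le_lipNorm hKg p q
    rwa [Real.norm_eq_abs, ← hGdef] at this
  have hGub' : G ≤ 1 + t := by
    rw [hGdef]
    apply lipNorm_le_of_forall (by linarith)
    intro p q
    rw [Real.norm_eq_abs]
    have h1 : g p - g q = (f p - f q) + ((g p - f p) - (g q - f q)) := by ring
    rw [h1]
    calc |(f p - f q) + ((g p - f p) - (g q - f q))|
        ≤ |f p - f q| + |(g p - f p) - (g q - f q)| := abs_add_le _ _
      _ ≤ dist p q + t * dist p q := add_le_add (hfpt p q) (hgfpt p q)
      _ = (1 + t) * dist p q := by ring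
  have hGlb : 1 - 2 * t ≤ G := by
    have hf₀ : (1 - t) * dist p₀ q₀ < |f p₀ - f q₀| := by
      have h1 : 1 - t < |y₁ y₀| := hy₁W.1
      have h2 : T p₀ - T q₀ = dist p₀ q₀ • y₀ := (smul_inv_smul₀ hd₀.ne' _).symm
      rw [hfsub, h2, ContinuousLinearMap.map_smul, smul_eq_mul, abs_mul, abs_of_pos hd₀]
      have h3 := mul_lt_mul_of_pos_left h1 hd₀
      linarith
    have hg₀ : (1 - 2 * t) * dist p₀ q₀ ≤ |g p₀ - g q₀| := by
      have h1 := hgfpt p₀ q₀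
      have h2 : |f p₀ - f q₀| ≤ |g p₀ - g q₀| + |(g p₀ - f p₀) - (g q₀ - f q₀)| := by
        have e1 : f p₀ - f q₀ = (g p₀ - g q₀) - ((g p₀ - f p₀) - (g q₀ - f q₀)) := by ring
        rw [e1]
        exact abs_sub _ _
      linarith
    have h3 : |g p₀ - g q₀| / dist p₀ q₀ ≤ G := by
      have := ratio_le_lipNorm hKg hp₀q₀
      rwa [Real.norm_eq_abs, ← hGdef] at this
    rw [div_le_iff₀ hd₀] at h3
    exact le_of_mul_le_mul_right (hg₀.trans h3) hd₀
  have hG0 : 0 < G := by linarith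
  have hA1 : 1 ≤ (1 - t) * ((1 + c) * G) := num_A1 ht0 ht2 hc16 hGlb
  have hB1 : 1 + 3 * t + (2 * t + c * ρ) * G ≤ (1 + c) * G := num_B1 ht0 ht2 hρ0 hc0 hcc hGlb
  -- consolidated approximation data for each φ ∈ Γ
  have hdata : ∀ φ ∈ Γ, ∃ lam : ℝ, |lam| ≤ 1 ∧ |φ et - lam| ≤ 2 * t ∧
      ∀ p q : M, |(φ.comp F_op) (T p - T q) - lam * (y₁ (T p - T q))| ≤ 2 * t * dist p q := by
    intro φ hφΓ
    obtain ⟨n, v, cc, hvV, hcc1, happ⟩ := happrox φ hφΓ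
    refine ⟨∑ j, cc j, ?_, ?_, ?_⟩
    · exact le_trans (Finset.abs_sum_le_sum_abs _ _) hcc1
    · have h1 : |(φ.comp F_op) e - (∑ j, cc j • v j) e| ≤ t := by
        have e1 : (φ.comp F_op) e - (∑ j, cc j • v j) e
            = (φ.comp F_op - ∑ j, cc j • v j) e := by
          simp [ContinuousLinearMap.sub_apply]
        rw [e1]
        have h2 : ‖(φ.comp F_op - ∑ j, cc j • v j) e‖
            ≤ ‖φ.comp F_op - ∑ j, cc j • v j‖ * ‖e‖ :=
          ContinuousLinearMap.le_opNorm _ _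
        rw [Real.norm_eq_abs, he, mul_one] at h2
        exact h2.trans happ.le
      have h2 : |(∑ j, cc j • v j) e - ∑ j, cc j| ≤ t := by
        have hsum : (∑ j, cc j • v j) e = ∑ j, cc j * (v j e) := by
          simp [ContinuousLinearMap.sum_apply, ContinuousLinearMap.smul_apply, smul_eq_mul]
        rw [hsum, ← Finset.sum_sub_distrib]
        calc |∑ j, (cc j * v j e - cc j)| ≤ ∑ j, |cc j * v j e - cc j| :=
              Finset.abs_sum_le_sum_abs _ _
          _ ≤ ∑ j, |cc j| * t := by
              apply Finset.sum_le_sum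
              intro j _
              have e2 : cc j * v j e - cc j = cc j * (v j e - 1) := by ring
              rw [e2, abs_mul]
              exact mul_le_mul_of_nonneg_left (hVe (v j) (hvV j)) (abs_nonneg _)
          _ = (∑ j, |cc j|) * t := by rw [Finset.sum_mul]
          _ ≤ 1 * t := mul_le_mul_of_nonneg_right hcc1 ht0.le
          _ = t := one_mul _
      have e3 : φ et = (φ.comp F_op) e := by simp [hetdef]
      rw [e3]
      calc |(φ.comp F_op) e - ∑ j, cc j|
          ≤ |(φ.comp F_op) e - (∑ j, cc j • v j) e| + |(∑ j, cc j • v j) e - ∑ j, cc j| := by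
            have := abs_sub_le ((φ.comp F_op) e) ((∑ j, cc j • v j) e) (∑ j, cc j)
            linarith
        _ ≤ t + t := add_le_add h1 h2
        _ = 2 * t := by ring
    · intro p q
      set w : Y := T p - T q with hwdef
      have hwn : ‖w‖ ≤ dist p q := hw p q
      have h1 : |(φ.comp F_op) w - (∑ j, cc j • v j) w| ≤ t * dist p q := by
        have e1 : (φ.comp F_op) w - (∑ j, cc j • v j) w
            = (φ.comp F_op - ∑ j, cc j • v j) w := by
          simp [ContinuousLinearMap.sub_apply]
        rw [e1]
        have h2 : ‖(φ.comp F_op - ∑ j, cc j • v j) w‖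
            ≤ ‖φ.comp F_op - ∑ j, cc j • v j‖ * ‖w‖ :=
          ContinuousLinearMap.le_opNorm _ _
        rw [Real.norm_eq_abs] at h2
        calc |(φ.comp F_op - ∑ j, cc j • v j) w|
            ≤ ‖φ.comp F_op - ∑ j, cc j • v j‖ * ‖w‖ := h2
          _ ≤ t * dist p q := mul_le_mul happ.le hwn (norm_nonneg _) ht0.le
      have h2 : |(∑ j, cc j • v j) w - (∑ j, cc j) * (y₁ w)| ≤ t / 2 * dist p q := by
        have hsum : (∑ j, cc j • v j) w = ∑ j, cc j * (v j w) := by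
          simp [ContinuousLinearMap.sum_apply, ContinuousLinearMap.smul_apply, smul_eq_mul]
        have hsum2 : (∑ j, cc j) * (y₁ w) = ∑ j, cc j * (y₁ w) := by rw [Finset.sum_mul]
        rw [hsum, hsum2, ← Finset.sum_sub_distrib]
        calc |∑ j, (cc j * v j w - cc j * y₁ w)| ≤ ∑ j, |cc j * v j w - cc j * y₁ w| :=
              Finset.abs_sum_le_sum_abs _ _
          _ ≤ ∑ j, |cc j| * (t / 2 * dist p q) := by
              apply Finset.sum_le_sum
              intro j _
              have e2 : cc j * v j w - cc j * y₁ w = cc j * (v j w - y₁ w) := by ring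
              rw [e2, abs_mul]
              exact mul_le_mul_of_nonneg_left (hVclose (v j) (hvV j) p q) (abs_nonneg _)
          _ = (∑ j, |cc j|) * (t / 2 * dist p q) := by rw [Finset.sum_mul]
          _ ≤ 1 * (t / 2 * dist p q) := by
              apply mul_le_mul_of_nonneg_right hcc1
              positivity
          _ = t / 2 * dist p q := one_mul _
      calc |(φ.comp F_op) w - (∑ j, cc j) * (y₁ w)|
          ≤ |(φ.comp F_op) w - (∑ j, cc j • v j) w|
            + |(∑ j, cc j • v j) w - (∑ j, cc j) * (y₁ w)| := by
            have := abs_sub_le ((φ.comp F_op) w) ((∑ j, cc j • v j) w) ((∑ j, cc j) * (y₁ w))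
            linarith
        _ ≤ t * dist p q + t / 2 * dist p q := add_le_add h1 h2
        _ ≤ 2 * t * dist p q := by
            have h9 : 0 ≤ t / 2 * dist p q := by positivity
            linarith
  -- definition of the approximating map
  set Gh : M → Y := fun x => L • T x - L • F_op (T x) + (L * ((1 + c) * g x)) • et with hGhdef
  have hGhz : Gh z = 0 := by
    rw [hGhdef]
    simp [hTz, hgz]
  have hφGh : ∀ (φ : Y →L[ℝ] ℝ) (p q : M),
      φ (Gh p - Gh q) = L * ((φ (T p - T q) - (φ.comp F_op) (T p - T q))
        + (1 + c) * (g p - g q) * φ et) := by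
    intro φ p q
    simp only [hGhdef, map_sub, map_add, ContinuousLinearMap.map_smul, smul_eq_mul,
      ContinuousLinearMap.comp_apply]
    ring
  -- the fundamental estimate
  have hφbound : ∀ φ ∈ Γ, ∀ p q : M,
      |φ (Gh p - Gh q)| ≤ L * ((1 + c) * G) * dist p q := by
    intro φ hφΓ p q
    have hφ1 : ‖φ‖ ≤ 1 := hΓ1 φ hφΓ
    have hd0 : (0 : ℝ) ≤ dist p q := dist_nonneg
    set w : Y := T p - T q with hwdef
    have hwn : ‖w‖ ≤ dist p q := hw p q
    set Δg : ℝ := g p - g q with hΔgdef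
    have hΔg : |Δg| ≤ G * dist p q := hgpt p q
    set k : ℝ := φ et with hkdef
    have hka : |k| ≤ ‖φ.comp F_op‖ := by
      have e1 : k = (φ.comp F_op) e := by rw [hkdef, hetdef]; simp
      rw [e1]
      have h2 := ContinuousLinearMap.le_opNorm (φ.comp F_op) e
      rw [Real.norm_eq_abs, he, mul_one] at h2
      exact h2
    have hk1 : |k| ≤ 1 := by
      have h1 : ‖φ.comp F_op‖ ≤ ‖φ‖ * ‖F_op‖ := ContinuousLinearMap.opNorm_comp_le _ _
      rw [hFn, mul_one] at h1
      linarith [hka]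
    obtain ⟨lam, hlam1, hke, herr⟩ := hdata φ hφΓ
    have herr' := herr p q
    have hΔf : |y₁ w| ≤ dist p q := by
      have := hfpt p q
      rwa [hfsub p q] at this
    have hΔgf : |Δg - y₁ w| ≤ t * dist p q := by
      have e1 : Δg - y₁ w = (g p - f p) - (g q - f q) := by
        rw [hΔgdef, ← hfsub p q]; ring
      rw [e1]
      exact hgfpt p q
    rw [hφGh φ p q, abs_mul, abs_of_pos hL,
      show L * ((1 + c) * G) * dist p q = L * ((1 + c) * G * dist p q) from by ring]
    apply mul_le_mul_of_nonneg_left _ hL.le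
    show |φ w - (φ.comp F_op) w + (1 + c) * Δg * k| ≤ (1 + c) * G * dist p q
    by_cases hV1 : ‖φ.comp F_op‖ + (1 - t) * ‖φ - φ.comp F_op‖ ≤ 1
    · -- case A : φ ∈ V₁
      set a : ℝ := ‖φ.comp F_op‖ with hadef
      set b : ℝ := ‖φ - φ.comp F_op‖ with hbdef
      have ha0 : 0 ≤ a := norm_nonneg _
      have hb0 : 0 ≤ b := norm_nonneg _
      have hφFw : |φ w - (φ.comp F_op) w| ≤ b * dist p q := by
        have e1 : φ w - (φ.comp F_op) w = (φ - φ.comp F_op) w := by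
          simp [ContinuousLinearMap.sub_apply]
        rw [e1]
        have h2 := ContinuousLinearMap.le_opNorm (φ - φ.comp F_op) w
        rw [Real.norm_eq_abs] at h2
        calc |(φ - φ.comp F_op) w| ≤ b * ‖w‖ := h2
          _ ≤ b * dist p q := mul_le_mul_of_nonneg_left hwn hb0
      have hterm2 : |(1 + c) * Δg * k| ≤ (1 + c) * (G * dist p q) * a := by
        rw [abs_mul, abs_mul, abs_of_nonneg (by linarith : (0:ℝ) ≤ 1 + c)]
        apply mul_le_mul _ hka (abs_nonneg _) (by positivity)
        exact mul_le_mul_of_nonneg_left hΔg (by linarith)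
      have hX0 : (0 : ℝ) ≤ (1 + c) * G := by positivity
      have h5 : (1 - t) * b ≤ 1 - a := by linarith
      have hb2 : b ≤ (1 - a) * ((1 + c) * G) := by
        calc b = b * 1 := (mul_one b).symm
          _ ≤ b * ((1 - t) * ((1 + c) * G)) := mul_le_mul_of_nonneg_left hA1 hb0
          _ = ((1 - t) * b) * ((1 + c) * G) := by ring
          _ ≤ (1 - a) * ((1 + c) * G) := mul_le_mul_of_nonneg_right h5 hX0
      calc |φ w - (φ.comp F_op) w + (1 + c) * Δg * k|
          ≤ |φ w - (φ.comp F_op) w| + |(1 + c) * Δg * k| := abs_add_le _ _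
        _ ≤ b * dist p q + (1 + c) * (G * dist p q) * a := add_le_add hφFw hterm2
        _ ≤ (1 - a) * ((1 + c) * G) * dist p q + (1 + c) * (G * dist p q) * a := by
            apply add_le_add_left
            exact mul_le_mul_of_nonneg_right hb2 hd0
        _ = (1 + c) * G * dist p q := by ring
    · -- case B : φ ∉ V₁
      have hkρ : |k| ≤ ρ := by
        apply hρcond φ hφΓ
        intro hmem
        exact hV1 hmem.2
      have hφw : |φ w| ≤ dist p q := by
        have h2 := ContinuousLinearMap.le_opNorm φ w
        rw [Real.norm_eq_abs] at h2
        calc |φ w| ≤ ‖φ‖ * ‖w‖ := h2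
          _ ≤ 1 * dist p q := mul_le_mul hφ1 hwn (norm_nonneg _) zero_le_one
          _ = dist p q := one_mul _
      have hsplit : φ w - (φ.comp F_op) w + (1 + c) * Δg * k
          = φ w - ((φ.comp F_op) w - lam * (y₁ w)) + lam * (Δg - y₁ w)
            + ((1 + c) * k - lam) * Δg := by ring
      have h4 : |(1 + c) * k - lam| ≤ 2 * t + c * ρ := by
        have e1 : (1 + c) * k - lam = (k - lam) + c * k := by ring
        rw [e1]
        calc |(k - lam) + c * k| ≤ |k - lam| + |c * k| := abs_add_le _ _
          _ ≤ 2 * t + c * ρ := by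
              apply add_le_add hke
              rw [abs_mul, abs_of_nonneg hc0]
              exact mul_le_mul_of_nonneg_left hkρ hc0
      rw [hsplit]
      have hstep : |φ w - ((φ.comp F_op) w - lam * (y₁ w)) + lam * (Δg - y₁ w)
          + ((1 + c) * k - lam) * Δg|
          ≤ |φ w| + |(φ.comp F_op) w - lam * (y₁ w)| + |lam * (Δg - y₁ w)|
            + |((1 + c) * k - lam) * Δg| := by
        have a1 := abs_add_le (φ w - ((φ.comp F_op) w - lam * (y₁ w)) + lam * (Δg - y₁ w))
          (((1 + c) * k - lam) * Δg)
        have a2 := abs_add_le (φ w - ((φ.comp F_op) w - lam * (y₁ w))) (lam * (Δg - y₁ w))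
        have a3 := abs_sub (φ w) ((φ.comp F_op) w - lam * (y₁ w))
        linarith
      have hb1 : |lam * (Δg - y₁ w)| ≤ 1 * (t * dist p q) := by
        rw [abs_mul]
        exact mul_le_mul hlam1 hΔgf (abs_nonneg _) zero_le_one
      have hb2 : |((1 + c) * k - lam) * Δg| ≤ (2 * t + c * ρ) * (G * dist p q) := by
        rw [abs_mul]
        apply mul_le_mul h4 hΔg (abs_nonneg _) (by positivity)
      have hfin : dist p q + 2 * t * dist p q + 1 * (t * dist p q)
          + (2 * t + c * ρ) * (G * dist p q) ≤ (1 + c) * G * dist p q := by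
        have h9 := mul_le_mul_of_nonneg_left hB1 hd0
        calc dist p q + 2 * t * dist p q + 1 * (t * dist p q)
            + (2 * t + c * ρ) * (G * dist p q)
            = dist p q * (1 + 3 * t + (2 * t + c * ρ) * G) := by ring
          _ ≤ dist p q * ((1 + c) * G) := h9
          _ = (1 + c) * G * dist p q := by ring
      linarith [hstep, hφw, herr', hb1, hb2, hfin]
  -- global Lipschitz bound for Gh
  set CC : ℝ := L * ((1 + c) * G) with hCCdef
  clear_value CC
  have hCC0 : 0 ≤ CC := by rw [hCCdef]; positivity
  have hGhub : ∀ p q : M, ‖Gh p - Gh q‖ ≤ CC * dist p q := by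
    intro p q
    rw [hΓn (Gh p - Gh q)]
    apply Real.sSup_le
    · rintro x ⟨φ, hφ, rfl⟩
      exact hφbound φ hφ p q
    · exact mul_nonneg hCC0 dist_nonneg
  -- value at the attaining pair
  have hy₁Gh : ∀ p q : M, y₁ (Gh p - Gh q) = L * ((1 + c) * (g p - g q)) := by
    intro p q
    rw [hφGh y₁ p q]
    have h1 : (y₁.comp F_op) (T p - T q) = y₁ (T p - T q) := by rw [hy₁F]
    have h2 : y₁ et = 1 := by rw [hetdef]; exact hy₁Fe
    rw [h1, h2]
    ring
  have hgrs : |g r - g s| = G * dist r s := by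
    have := hgatt
    rwa [Real.norm_eq_abs] at this
  have hGhval : ‖Gh r - Gh s‖ = CC * dist r s := by
    apply le_antisymm (hGhub r s)
    have h1 : ‖y₁ (Gh r - Gh s)‖ ≤ ‖y₁‖ * ‖Gh r - Gh s‖ := y₁.le_opNorm _
    rw [Real.norm_eq_abs] at h1
    have h2 : |y₁ (Gh r - Gh s)| = CC * dist r s := by
      rw [hy₁Gh r s, abs_mul, abs_mul, abs_of_pos hL,
        abs_of_nonneg (by linarith : (0:ℝ) ≤ 1 + c), hgrs, hCCdef]
      ring
    calc CC * dist r s = |y₁ (Gh r - Gh s)| := h2.symm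
      _ ≤ ‖y₁‖ * ‖Gh r - Gh s‖ := h1
      _ ≤ 1 * ‖Gh r - Gh s‖ := mul_le_mul_of_nonneg_right hy₁n (norm_nonneg _)
      _ = ‖Gh r - Gh s‖ := one_mul _
  obtain ⟨hlipeq, hSAGh⟩ := lipNorm_pack hCC0 hrs hGhub hGhval
  -- Gh is Lipschitz
  have hGhlip : ∃ K : ℝ≥0, LipschitzWith K Gh := by
    refine ⟨⟨CC, hCC0⟩, LipschitzWith.of_dist_le_mul fun x y => ?_⟩
    rw [dist_eq_norm]
    exact (hGhub x y).trans (le_of_eq rfl)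
  -- Gh is Lipschitz compact
  have hGhcpt : IsLipCompact Gh := by
    set Ψ : Y × ℝ → Y := fun v =>
      L • ((L⁻¹ : ℝ) • v.1) - L • F_op ((L⁻¹ : ℝ) • v.1) + v.2 • et with hΨdef
    have hΨc : Continuous Ψ := by
      apply Continuous.add
      · apply Continuous.sub
        · exact (continuous_const_smul _).comp ((continuous_const_smul _).comp continuous_fst)
        · exact (continuous_const_smul _).comp
            (F_op.continuous.comp ((continuous_const_smul _).comp continuous_fst))
      · exact continuous_snd.smul continuous_const
    have hKbig : IsCompact (Ψ '' (K₀s ×ˢ Icc (-CC) CC)) :=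
      ((hK₀c.prod isCompact_Icc).image hΨc)
    have hsub : {y : Y | ∃ p q : M, p ≠ q ∧ y = (dist p q)⁻¹ • (Gh p - Gh q)}
        ⊆ Ψ '' (K₀s ×ˢ Icc (-CC) CC) := by
      rintro y ⟨p, q, hpq, rfl⟩
      have hd : 0 < dist p q := dist_pos.mpr hpq
      refine ⟨((dist p q)⁻¹ • (F₀ p - F₀ q), (dist p q)⁻¹ * (L * ((1 + c) * (g p - g q)))),
        ⟨subset_closure ⟨p, q, hpq, rfl⟩, ?_⟩, ?_⟩
      · rw [mem_Icc, ← abs_le]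
        have h1 : |(dist p q)⁻¹ * (L * ((1 + c) * (g p - g q)))|
            = (dist p q)⁻¹ * (L * ((1 + c) * |g p - g q|)) := by
          rw [abs_mul, abs_mul, abs_mul, abs_of_pos (inv_pos.mpr hd), abs_of_pos hL,
            abs_of_nonneg (by linarith : (0:ℝ) ≤ 1 + c)]
        rw [h1]
        have h2 : (1 + c) * |g p - g q| ≤ (1 + c) * (G * dist p q) :=
          mul_le_mul_of_nonneg_left (hgpt p q) (by linarith)
        calc (dist p q)⁻¹ * (L * ((1 + c) * |g p - g q|))
            ≤ (dist p q)⁻¹ * (L * ((1 + c) * (G * dist p q))) := by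
              apply mul_le_mul_of_nonneg_left _ (by positivity)
              exact mul_le_mul_of_nonneg_left h2 hL.le
          _ = CC := by rw [hCCdef, inv_mul_eq_div, div_eq_iff hd.ne']; ring
      · -- Ψ applied equals the ratio element
        show L • ((L⁻¹ : ℝ) • ((dist p q)⁻¹ • (F₀ p - F₀ q)))
            - L • F_op ((L⁻¹ : ℝ) • ((dist p q)⁻¹ • (F₀ p - F₀ q)))
            + ((dist p q)⁻¹ * (L * ((1 + c) * (g p - g q)))) • et
            = (dist p q)⁻¹ • (Gh p - Gh q)
        have e0 : (L⁻¹ : ℝ) • ((dist p q)⁻¹ • (F₀ p - F₀ q))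
            = (dist p q)⁻¹ • (T p - T q) := by
          rw [hTsub, smul_comm]
        have e1 : Gh p - Gh q = L • (T p - T q) - L • F_op (T p - T q)
            + (L * ((1 + c) * (g p - g q))) • et := by
          simp only [hGhdef, map_sub, smul_sub]
          rw [show L * ((1 + c) * (g p - g q))
              = L * ((1 + c) * g p) - L * ((1 + c) * g q) from by ring, sub_smul]
          abel
        rw [e0, e1, ContinuousLinearMap.map_smul]
        module
    have hcl : closure {y : Y | ∃ p q : M, p ≠ q ∧ y = (dist p q)⁻¹ • (Gh p - Gh q)}
        ⊆ Ψ '' (K₀s ×ˢ Icc (-CC) CC) := closure_minimal hsub hKbig.isClosed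
    exact hKbig.of_isClosed_subset isClosed_closure hcl
  -- distance estimate
  set D : ℝ := 3 * t + (2 * t + c) * (1 + t) with hDdef
  clear_value D
  have hD0 : 0 ≤ D := by rw [hDdef]; exact num_D0 ht0 hc0
  have hdiffφ : ∀ φ ∈ Γ, ∀ p q : M,
      |φ ((Gh p - F₀ p) - (Gh q - F₀ q))| ≤ (L * D) * dist p q := by
    intro φ hφΓ p q
    have hφ1 : ‖φ‖ ≤ 1 := hΓ1 φ hφΓ
    have hd0 : (0 : ℝ) ≤ dist p q := dist_nonneg
    set w : Y := T p - T q with hwdef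
    set Δg : ℝ := g p - g q with hΔgdef
    have hΔg : |Δg| ≤ (1 + t) * dist p q := by
      calc |Δg| ≤ G * dist p q := hgpt p q
        _ ≤ (1 + t) * dist p q := mul_le_mul_of_nonneg_right hGub' hd0
    set k : ℝ := φ et with hkdef
    have hka : |k| ≤ ‖φ.comp F_op‖ := by
      have e1 : k = (φ.comp F_op) e := by rw [hkdef, hetdef]; simp
      rw [e1]
      have h2 := ContinuousLinearMap.le_opNorm (φ.comp F_op) e
      rw [Real.norm_eq_abs, he, mul_one] at h2
      exact h2
    have hk1 : |k| ≤ 1 := by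
      have h1 : ‖φ.comp F_op‖ ≤ ‖φ‖ * ‖F_op‖ := ContinuousLinearMap.opNorm_comp_le _ _
      rw [hFn, mul_one] at h1
      linarith [hka]
    obtain ⟨lam, hlam1, hke, herr⟩ := hdata φ hφΓ
    have herr' := herr p q
    have hΔgf : |Δg - y₁ w| ≤ t * dist p q := by
      have e1 : Δg - y₁ w = (g p - f p) - (g q - f q) := by
        rw [hΔgdef, hwdef, ← hfsub p q]; ring
      rw [e1]
      exact hgfpt p q
    have hval : φ ((Gh p - F₀ p) - (Gh q - F₀ q))
        = L * (-((φ.comp F_op) w) + (1 + c) * Δg * k) := by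
      have e2 : (Gh p - F₀ p) - (Gh q - F₀ q) = (Gh p - Gh q) - (F₀ p - F₀ q) := by abel
      rw [e2, map_sub, hφGh φ p q]
      have e3 : F₀ p - F₀ q = L • w := by
        rw [hwdef, hTsub, smul_smul, mul_inv_cancel₀ hL.ne', one_smul]
      rw [e3, ContinuousLinearMap.map_smul, smul_eq_mul]
      ring
    rw [hval, abs_mul, abs_of_pos hL,
      show L * D * dist p q = L * (D * dist p q) from by ring]
    apply mul_le_mul_of_nonneg_left _ hL.le
    have hsplit : -((φ.comp F_op) w) + (1 + c) * Δg * k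
        = -((φ.comp F_op) w - lam * (y₁ w)) + lam * (Δg - y₁ w)
          + ((1 + c) * k - lam) * Δg := by ring
    rw [hsplit]
    have h4 : |(1 + c) * k - lam| ≤ 2 * t + c := by
      have e1 : (1 + c) * k - lam = (k - lam) + c * k := by ring
      rw [e1]
      calc |(k - lam) + c * k| ≤ |k - lam| + |c * k| := abs_add_le _ _
        _ ≤ 2 * t + c := by
            apply add_le_add hke
            rw [abs_mul, abs_of_nonneg hc0]
            calc c * |k| ≤ c * 1 := mul_le_mul_of_nonneg_left hk1 hc0
              _ = c := mul_one _
    have hstep : |-((φ.comp F_op) w - lam * (y₁ w)) + lam * (Δg - y₁ w)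
        + ((1 + c) * k - lam) * Δg|
        ≤ |(φ.comp F_op) w - lam * (y₁ w)| + |lam * (Δg - y₁ w)|
          + |((1 + c) * k - lam) * Δg| := by
      have a1 := abs_add_le (-((φ.comp F_op) w - lam * (y₁ w)) + lam * (Δg - y₁ w))
        (((1 + c) * k - lam) * Δg)
      have a2 := abs_add_le (-((φ.comp F_op) w - lam * (y₁ w))) (lam * (Δg - y₁ w))
      have a3 : |-((φ.comp F_op) w - lam * (y₁ w))| = |(φ.comp F_op) w - lam * (y₁ w)| :=
        abs_neg _
      linarith
    have hb1 : |lam * (Δg - y₁ w)| ≤ 1 * (t * dist p q) := by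
      rw [abs_mul]
      exact mul_le_mul hlam1 hΔgf (abs_nonneg _) zero_le_one
    have hb2 : |((1 + c) * k - lam) * Δg| ≤ (2 * t + c) * ((1 + t) * dist p q) := by
      rw [abs_mul]
      apply mul_le_mul h4 hΔg (abs_nonneg _) (by linarith)
    have hfin : 2 * t * dist p q + 1 * (t * dist p q) + (2 * t + c) * ((1 + t) * dist p q)
        ≤ D * dist p q := by
      rw [hDdef]
      exact le_of_eq (by ring)
    linarith [hstep, herr', hb1, hb2, hfin]
  have hdiff_ub : ∀ p q : M, ‖(Gh p - F₀ p) - (Gh q - F₀ q)‖ ≤ (L * D) * dist p q := by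
    intro p q
    rw [hΓn ((Gh p - F₀ p) - (Gh q - F₀ q))]
    apply Real.sSup_le
    · rintro x ⟨φ, hφ, rfl⟩
      exact hdiffφ φ hφ p q
    · have := dist_nonneg (x := p) (y := q)
      positivity
  have hdiff : lipNorm (fun x => Gh x - F₀ x) ≤ L * D :=
    lipNorm_le_of_forall (by positivity) hdiff_ub
  -- final numerical estimate
  have hfinal : L * D < ε := by
    rw [hDdef]
    exact num_final hL hε ht0 ht1 ht2 hρ0 hρ1 hc0 hcρ ht3
  exact ⟨Gh, ⟨hGhlip, hGhz⟩, hGhcpt, hSAGh, lt_of_le_of_lt hdiff hfinal⟩
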